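/- In the sleeping experts setting with finite action set A and T ≥ ln|A|, there exists an algorithm for the Learner (playing at each round a distribution over the currently awake actions A^t) guaranteeing, against any adaptive Adversary, expected sleeping experts regret E[R^T_sleeping] ≤ 4·√(T·ln|A|). -/

import Mathlib

open scoped BigOperators

noncomputable section

/-- The prefix of a full transcript `a` before round `t`. -/
def transcriptPrefix {A : Type*} {T : ℕ} (a : Fin T → A) (t : Fin T) : Fin t.1 → A :=
  fun s => a ⟨s.1, s.2.trans t.2⟩

/-- The prefix of a history `h` before its `s`-th entry. -/
def historyPrefix {A : Type*} {m : ℕ} (h : Fin m → A) (s : Fin m) : Fin s.1 → A :=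
  fun u => h ⟨u.1, u.2.trans s.2⟩

/-- A learner's algorithm in the sleeping experts setting: at round `t` it maps the
realized history, the past loss vectors, and the past and current sets of awake experts
to a distribution over actions. -/
def SleepingStrategy (A : Type) (T : ℕ) : Type :=
  ∀ t : Fin T, (Fin t.1 → A) →            -- realized history
    (Fin t.1 → A → ℝ) →                   -- past loss vectors
    (Fin t.1 → Finset A) →                -- past sets of awake experts
    Finset A →                            -- current set of awake experts A^t
    A → ℝ

/-- The per-round play induced by a strategy `σ` against the adaptive Adversary
`(Av, r)`. -/
noncomputable def sleepingPlay {A : Type} {T : ℕ} (σ : SleepingStrategy A T)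
    (Av : ∀ t : Fin T, (Fin t.1 → A) → Finset A)
    (r : ∀ t : Fin T, (Fin t.1 → A) → A → ℝ)
    (t : Fin T) (h : Fin t.1 → A) : A → ℝ :=
  σ t h (fun s => r ⟨s.1, s.2.trans t.2⟩ (historyPrefix h s))
    (fun s => Av ⟨s.1, s.2.trans t.2⟩ (historyPrefix h s))
    (Av t h)

namespace SleepAux

set_option linter.unusedSectionVars false

variable {A : Type} [Fintype A] [DecidableEq A] {T : ℕ}

/-- exponential weight of expert `j` given past data -/
def wt (η : ℝ) {m : ℕ} (h : Fin m → A) (past : Fin m → A → ℝ)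
    (pAv : Fin m → Finset A) (j : A) : ℝ :=
  Real.exp (η * ∑ s : Fin m, (if j ∈ pAv s then past s (h s) - past s j else 0))

/-- the sleeping exponential weights strategy -/
def strat (η : ℝ) : SleepingStrategy A T :=
  fun _t h past pAv C j =>
    if j ∈ C then wt η h past pAv j / ∑ i ∈ C, wt η h past pAv i else 0

lemma wt_pos (η : ℝ) {m : ℕ} (h : Fin m → A) (past : Fin m → A → ℝ)
    (pAv : Fin m → Finset A) (j : A) : 0 < wt η h past pAv j := Real.exp_pos _

lemma strat_prob (η : ℝ) (t : Fin T) (h : Fin t.1 → A) (past : Fin t.1 → A → ℝ)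
    (pAv : Fin t.1 → Finset A) (C : Finset A) (hC : C.Nonempty) :
    (∀ j, 0 ≤ strat η t h past pAv C j) ∧
    (∀ j ∉ C, strat η t h past pAv C j = 0) ∧
    ∑ j, strat η t h past pAv C j = 1 := by
  have hZ : 0 < ∑ i ∈ C, wt η h past pAv i :=
    Finset.sum_pos (fun i _ => wt_pos η h past pAv i) hC
  refine ⟨fun j => ?_, fun j hj => by simp [strat, hj], ?_⟩
  · simp only [strat]
    split
    · exact div_nonneg (wt_pos η h past pAv j).le hZ.le
    · exact le_refl 0
  · simp only [strat]
    rw [Finset.sum_ite_mem, Finset.univ_inter, ← Finset.sum_div, div_self hZ.ne']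

variable (Av : ∀ t : Fin T, (Fin t.1 → A) → Finset A)
variable (r : ∀ t : Fin T, (Fin t.1 → A) → A → ℝ)

/-- instantaneous regret of expert `j` at round `t` on transcript `a` -/
def gain (a : Fin T → A) (t : Fin T) (j : A) : ℝ :=
  if j ∈ Av t (transcriptPrefix a t) then
    r t (transcriptPrefix a t) (a t) - r t (transcriptPrefix a t) j else 0

/-- cumulative regret of expert `j` over the first `n` rounds -/
def Sreg (a : Fin T → A) (n : ℕ) (j : A) : ℝ :=
  ∑ t ∈ Finset.univ.filter (fun t : Fin T => t.1 < n), gain Av r a t j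

/-- the exponential potential -/
def Wpot (η : ℝ) (a : Fin T → A) (n : ℕ) : ℝ :=
  ∑ j : A, Real.exp (η * Sreg Av r a n j)

/-- probability that the strategy plays `a t` at round `t` -/
def xp (η : ℝ) (t : Fin T) (a : Fin T → A) : ℝ :=
  sleepingPlay (strat η) Av r t (transcriptPrefix a t) (a t)

/-- probability of the first `n` rounds of transcript `a` -/
def Ppre (η : ℝ) (n : ℕ) (a : Fin T → A) : ℝ :=
  ∏ t ∈ Finset.univ.filter (fun t : Fin T => t.1 < n), xp Av r η t a

lemma sum_filter_lt {n : ℕ} (hn : n ≤ T) (f : Fin T → ℝ) :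
    ∑ t ∈ Finset.univ.filter (fun t : Fin T => t.1 < n), f t
      = ∑ s : Fin n, f (Fin.castLE hn s) := by
  refine (Finset.sum_bij' (fun (t : Fin T) (ht : t ∈ Finset.univ.filter
      (fun t : Fin T => t.1 < n)) => (⟨t.1, by simpa using ht⟩ : Fin n))
    (fun (s : Fin n) _ => Fin.castLE hn s) ?_ ?_ ?_ ?_ ?_)
  · intro t ht; exact Finset.mem_univ _
  · intro s hs; simp [Fin.castLE]
  · intro t ht; rfl
  · intro s hs; rfl
  · intro t ht; rfl

lemma wt_transcript (η : ℝ) (t : Fin T) (a : Fin T → A) (j : A) :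
    wt η (transcriptPrefix a t)
      (fun s => r ⟨s.1, s.2.trans t.2⟩ (historyPrefix (transcriptPrefix a t) s))
      (fun s => Av ⟨s.1, s.2.trans t.2⟩ (historyPrefix (transcriptPrefix a t) s)) j
    = Real.exp (η * Sreg Av r a t.1 j) := by
  unfold wt Sreg
  rw [sum_filter_lt (le_of_lt t.2) (fun t' => gain Av r a t' j)]
  rfl

lemma xp_eq (η : ℝ) (t : Fin T) (a : Fin T → A) :
    xp Av r η t a =
      if a t ∈ Av t (transcriptPrefix a t) then
        Real.exp (η * Sreg Av r a t.1 (a t)) /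
          ∑ i ∈ Av t (transcriptPrefix a t), Real.exp (η * Sreg Av r a t.1 i)
      else 0 := by
  simp only [xp, sleepingPlay, strat, wt_transcript Av r η t a]

lemma xp_nonneg (η : ℝ) (t : Fin T) (a : Fin T → A) : 0 ≤ xp Av r η t a := by
  rw [xp_eq]
  split
  · exact div_nonneg (Real.exp_pos _).le
      (Finset.sum_nonneg fun i _ => (Real.exp_pos _).le)
  · exact le_refl 0

lemma Ppre_nonneg (η : ℝ) (n : ℕ) (a : Fin T → A) : 0 ≤ Ppre Av r η n a :=
  Finset.prod_nonneg fun t _ => xp_nonneg Av r η t a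

lemma pref_congr {n : ℕ} {a b : Fin T → A} (h : ∀ s : Fin T, s.1 < n → a s = b s)
    {t : Fin T} (ht : t.1 ≤ n) : transcriptPrefix a t = transcriptPrefix b t :=
  funext fun s => h ⟨s.1, s.2.trans t.2⟩ (lt_of_lt_of_le s.2 ht)

lemma gain_congr {a b : Fin T → A} {t : Fin T}
    (h : ∀ s : Fin T, s.1 ≤ t.1 → a s = b s) (j : A) :
    gain Av r a t j = gain Av r b t j := by
  unfold gain
  rw [pref_congr (fun s hs => h s (le_of_lt hs)) (le_refl t.1), h t (le_refl t.1)]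

lemma Sreg_congr {n : ℕ} {a b : Fin T → A} (h : ∀ s : Fin T, s.1 < n → a s = b s)
    (j : A) : Sreg Av r a n j = Sreg Av r b n j := by
  unfold Sreg
  refine Finset.sum_congr rfl fun t ht => ?_
  have ht' : t.1 < n := by simpa using ht
  exact gain_congr Av r (fun s hs => h s (lt_of_le_of_lt hs ht')) j

lemma Wpot_congr (η : ℝ) {n : ℕ} {a b : Fin T → A}
    (h : ∀ s : Fin T, s.1 < n → a s = b s) : Wpot Av r η a n = Wpot Av r η b n := by
  unfold Wpot
  exact Finset.sum_congr rfl fun j _ => by rw [Sreg_congr Av r h j]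

lemma xp_congr (η : ℝ) {t : Fin T} {a b : Fin T → A}
    (h : ∀ s : Fin T, s.1 ≤ t.1 → a s = b s) : xp Av r η t a = xp Av r η t b := by
  unfold xp
  rw [pref_congr (fun s hs => h s (le_of_lt hs)) (le_refl t.1), h t (le_refl t.1)]

lemma Ppre_congr (η : ℝ) {n : ℕ} {a b : Fin T → A}
    (h : ∀ s : Fin T, s.1 < n → a s = b s) : Ppre Av r η n a = Ppre Av r η n b := by
  unfold Ppre
  refine Finset.prod_congr rfl fun t ht => ?_
  have ht' : t.1 < n := by simpa using ht
  exact xp_congr Av r η (fun s hs => h s (lt_of_le_of_lt hs ht'))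

lemma filter_succ {n : ℕ} (hn : n < T) :
    Finset.univ.filter (fun t : Fin T => t.1 < n + 1)
      = insert (⟨n, hn⟩ : Fin T) (Finset.univ.filter (fun t : Fin T => t.1 < n)) := by
  ext t
  simp only [Finset.mem_filter, Finset.mem_univ, true_and, Finset.mem_insert, Fin.ext_iff]
  omega

lemma Ppre_succ (η : ℝ) {n : ℕ} (hn : n < T) (a : Fin T → A) :
    Ppre Av r η (n + 1) a = xp Av r η ⟨n, hn⟩ a * Ppre Av r η n a := by
  unfold Ppre
  rw [filter_succ hn, Finset.prod_insert (by simp)]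

lemma Sreg_succ {n : ℕ} (hn : n < T) (a : Fin T → A) (j : A) :
    Sreg Av r a (n + 1) j = Sreg Av r a n j + gain Av r a ⟨n, hn⟩ j := by
  unfold Sreg
  rw [filter_succ hn, Finset.sum_insert (by simp), add_comm]


lemma update_piSplitAt (i : Fin T) (x b : A) (g : {j : Fin T // j ≠ i} → A) :
    Function.update ((Equiv.piSplitAt i (fun _ : Fin T => A)).symm (x, g)) i b
      = (Equiv.piSplitAt i (fun _ : Fin T => A)).symm (b, g) := by
  funext j
  by_cases hj : j = i
  · subst hj
    simp [Equiv.piSplitAt_symm_apply]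
  · simp [Function.update_of_ne hj, Equiv.piSplitAt_symm_apply, hj]

lemma sum_sum_update (i : Fin T) (f : (Fin T → A) → ℝ) :
    ∑ a : Fin T → A, ∑ b : A, f (Function.update a i b)
      = (Fintype.card A : ℝ) * ∑ a : Fin T → A, f a := by
  classical
  have h1 : ∀ (F : (Fin T → A) → ℝ), ∑ a : Fin T → A, F a
      = ∑ p : A × ({j : Fin T // j ≠ i} → A),
          F ((Equiv.piSplitAt i (fun _ : Fin T => A)).symm p) :=
    fun F => (Equiv.sum_comp (Equiv.piSplitAt i (fun _ : Fin T => A)).symm F).symm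
  rw [h1 (fun a => ∑ b : A, f (Function.update a i b)), h1 f]
  rw [Fintype.sum_prod_type]
  simp only [update_piSplitAt]
  have key : ∀ _x : A, (∑ g : {j : Fin T // j ≠ i} → A,
        ∑ b : A, f ((Equiv.piSplitAt i (fun _ : Fin T => A)).symm (b, g)))
      = ∑ p : A × ({j : Fin T // j ≠ i} → A),
          f ((Equiv.piSplitAt i (fun _ : Fin T => A)).symm p) := by
    intro x
    rw [Fintype.sum_prod_type]
    exact Finset.sum_comm
  calc (∑ x : A, ∑ g : {j : Fin T // j ≠ i} → A,
        ∑ b : A, f ((Equiv.piSplitAt i (fun _ : Fin T => A)).symm (b, g)))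
      = ∑ _x : A, ∑ p : A × ({j : Fin T // j ≠ i} → A),
          f ((Equiv.piSplitAt i (fun _ : Fin T => A)).symm p) :=
        Finset.sum_congr rfl fun x _ => key x
    _ = (Fintype.card A : ℝ) * ∑ p : A × ({j : Fin T // j ≠ i} → A),
          f ((Equiv.piSplitAt i (fun _ : Fin T => A)).symm p) := by
        rw [Finset.sum_const, Finset.card_univ, nsmul_eq_mul]

lemma exp_quad {x : ℝ} (hx : |x| ≤ 1) : Real.exp x ≤ 1 + x + x ^ 2 := by
  have h := Real.exp_bound hx (n := 2) (by norm_num)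
  have h2 : ∑ i ∈ Finset.range 2, x ^ i / (Nat.factorial i) = 1 + x := by
    simp [Finset.sum_range_succ, Nat.factorial]
  rw [h2] at h
  have h3 := (abs_le.mp h).2
  have h4 : |x| ^ 2 = x ^ 2 := sq_abs x
  have h5 : ((Nat.succ 2 : ℕ) : ℝ) / ((Nat.factorial 2 : ℕ) * (2:ℕ)) = 3/4 := by
    norm_num [Nat.factorial]
  rw [h5, h4] at h3
  nlinarith

lemma update_agree_below {n : ℕ} (hn : n < T) (a : Fin T → A) (b : A) :
    ∀ s : Fin T, s.1 < n → Function.update a (⟨n, hn⟩ : Fin T) b s = a s := by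
  intro s hs
  apply Function.update_of_ne
  intro h
  rw [h] at hs
  exact lt_irrefl n hs

lemma step_identity (η : ℝ) {n : ℕ} (hn : n < T) (f : (Fin T → A) → ℝ) :
    (Fintype.card A : ℝ) * ∑ a : Fin T → A, Ppre Av r η (n+1) a * f a
      = ∑ a : Fin T → A, Ppre Av r η n a *
          ∑ b : A, xp Av r η ⟨n, hn⟩ (Function.update a ⟨n, hn⟩ b)
            * f (Function.update a ⟨n, hn⟩ b) := by
  rw [← sum_sum_update (⟨n, hn⟩ : Fin T) (fun a => Ppre Av r η (n+1) a * f a)]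
  refine Finset.sum_congr rfl fun a _ => ?_
  rw [Finset.mul_sum]
  refine Finset.sum_congr rfl fun b _ => ?_
  rw [Ppre_succ Av r η hn, Ppre_congr Av r η (update_agree_below hn a b)]
  ring

lemma sum_xp_update (η : ℝ) (hAv : ∀ t h, (Av t h).Nonempty) {n : ℕ} (hn : n < T)
    (a : Fin T → A) :
    ∑ b : A, xp Av r η ⟨n, hn⟩ (Function.update a ⟨n, hn⟩ b) = 1 := by
  have hx : ∀ b : A, xp Av r η ⟨n, hn⟩ (Function.update a ⟨n, hn⟩ b)
      = sleepingPlay (strat η) Av r ⟨n, hn⟩ (transcriptPrefix a ⟨n, hn⟩) b := by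
    intro b
    unfold xp
    rw [pref_congr (update_agree_below hn a b) (le_refl n), Function.update_self]
  simp only [hx]
  exact (strat_prob η ⟨n, hn⟩ (transcriptPrefix a ⟨n, hn⟩) _ _ _ (hAv _ _)).2.2



lemma cond_step (η : ℝ) (hη0 : 0 ≤ η) (hη1 : η ≤ 1)
    (hAv : ∀ t h, (Av t h).Nonempty)
    (hr : ∀ t h j, r t h j ∈ Set.Icc (0:ℝ) 1)
    {n : ℕ} (hn : n < T) (a : Fin T → A) :
    ∑ b : A, xp Av r η ⟨n, hn⟩ (Function.update a ⟨n, hn⟩ b)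
        * Wpot Av r η (Function.update a ⟨n, hn⟩ b) (n+1)
      ≤ (1 + η ^ 2) * Wpot Av r η a n := by
  set i : Fin T := ⟨n, hn⟩ with hi
  set p := transcriptPrefix a i with hp
  set C := Av i p with hC
  set ρ : A → ℝ := fun b => r i p b with hρ
  set w : A → ℝ := fun j => Real.exp (η * Sreg Av r a n j) with hw
  set Z := ∑ j ∈ C, w j with hZdef
  set g : A → A → ℝ := fun b j => if j ∈ C then ρ b - ρ j else 0 with hg
  have hwpos : ∀ j, 0 < w j := fun j => Real.exp_pos _
  have hZ : 0 < Z := Finset.sum_pos (fun j _ => hwpos j) (hAv i p)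
  have hprefu : ∀ b : A, transcriptPrefix (Function.update a i b) i = p :=
    fun b => pref_congr (update_agree_below hn a b) (le_refl n)
  have hSregu : ∀ b j, Sreg Av r (Function.update a i b) n j = Sreg Av r a n j :=
    fun b j => Sreg_congr Av r (update_agree_below hn a b) j
  -- rewrite the probability
  have hxp : ∀ b : A, xp Av r η i (Function.update a i b)
      = if b ∈ C then w b / Z else 0 := by
    intro b
    rw [xp_eq]
    simp only [Function.update_self, hprefu b]
    have hiv : (i.1 : ℕ) = n := rfl
    have hsum : ∑ j ∈ C, Real.exp (η * Sreg Av r (Function.update a i b) i.1 j) = Z := by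
      refine Finset.sum_congr rfl fun j _ => ?_
      rw [hiv, hSregu b j]
    rw [hsum, hSregu b b]
  -- rewrite the potential
  have hWu : ∀ b : A, Wpot Av r η (Function.update a i b) (n+1)
      = ∑ j : A, w j * Real.exp (η * g b j) := by
    intro b
    unfold Wpot
    refine Finset.sum_congr rfl fun j _ => ?_
    rw [Sreg_succ Av r hn, hSregu b j]
    have hgain : gain Av r (Function.update a i b) i j = g b j := by
      unfold gain
      rw [hprefu b, Function.update_self]
    rw [hgain, mul_add, Real.exp_add]
  have hgabs : ∀ b j, |g b j| ≤ 1 := by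
    intro b j
    simp only [hg]
    split
    · rw [abs_le]
      have h1 := hr i p b
      have h2 := hr i p j
      simp only [Set.mem_Icc] at h1 h2
      constructor <;> simp only [hρ] <;> nlinarith [h1.1, h1.2, h2.1, h2.2]
    · simp
  set Wn := Wpot Av r η a n with hWn
  have hWneq : Wn = ∑ j : A, w j := rfl
  set K := ∑ j ∈ C, w j * ρ j with hK
  -- inner bound
  have hInner : ∀ b : A, (∑ j : A, w j * Real.exp (η * g b j))
      ≤ (1 + η ^ 2) * Wn + η * (ρ b * Z - K) := by
    intro b
    have step1 : (∑ j : A, w j * Real.exp (η * g b j))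
        ≤ ∑ j : A, w j * (1 + η * g b j + η ^ 2) := by
      refine Finset.sum_le_sum fun j _ => ?_
      refine mul_le_mul_of_nonneg_left ?_ (hwpos j).le
      have h1 : |η * g b j| ≤ 1 := by
        rw [abs_mul, abs_of_nonneg hη0]
        calc η * |g b j| ≤ 1 * 1 :=
              mul_le_mul hη1 (hgabs b j) (abs_nonneg _) zero_le_one
          _ = 1 := one_mul 1
      calc Real.exp (η * g b j) ≤ 1 + η * g b j + (η * g b j) ^ 2 := exp_quad h1
        _ ≤ 1 + η * g b j + η ^ 2 := by
            have hg2 : (g b j) ^ 2 ≤ 1 := by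
              have h3 := hgabs b j
              nlinarith [abs_nonneg (g b j), sq_abs (g b j)]
            nlinarith [sq_nonneg η]
    have step2 : ∑ j : A, w j * (1 + η * g b j + η ^ 2)
        = (1 + η ^ 2) * Wn + η * (ρ b * Z - K) := by
      have expand : ∀ j : A, w j * (1 + η * g b j + η ^ 2)
          = (1 + η ^ 2) * w j + η * (w j * g b j) := fun j => by ring
      rw [Finset.sum_congr rfl fun j _ => expand j, Finset.sum_add_distrib,
        ← Finset.mul_sum, ← Finset.mul_sum, ← hWneq]
      congr 1
      congr 1
      have hterm : ∀ j : A, w j * g b j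
          = if j ∈ C then w j * ρ b - w j * ρ j else 0 := by
        intro j
        simp only [hg]
        split
        · ring
        · ring
      rw [Finset.sum_congr rfl fun j _ => hterm j, Finset.sum_ite_mem,
        Finset.univ_inter, Finset.sum_sub_distrib, ← Finset.sum_mul, ← hZdef, ← hK]
      ring
    exact le_trans step1 (le_of_eq step2)
  -- assemble
  simp only [hxp, hWu]
  have hsplit : ∑ b : A, (if b ∈ C then w b / Z else 0)
        * (∑ j : A, w j * Real.exp (η * g b j))
      = ∑ b ∈ C, (w b * (∑ j : A, w j * Real.exp (η * g b j))) / Z := by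
    have h1 : ∀ b : A, (if b ∈ C then w b / Z else 0)
          * (∑ j : A, w j * Real.exp (η * g b j))
        = if b ∈ C then (w b * (∑ j : A, w j * Real.exp (η * g b j))) / Z else 0 := by
      intro b
      split
      · rw [div_mul_eq_mul_div]
      · rw [zero_mul]
    rw [Finset.sum_congr rfl fun b _ => h1 b, Finset.sum_ite_mem, Finset.univ_inter]
  rw [hsplit, ← Finset.sum_div, div_le_iff₀ hZ]
  calc ∑ b ∈ C, w b * (∑ j : A, w j * Real.exp (η * g b j))
      ≤ ∑ b ∈ C, w b * ((1 + η ^ 2) * Wn + η * (ρ b * Z - K)) :=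
        Finset.sum_le_sum fun b _ => mul_le_mul_of_nonneg_left (hInner b) (hwpos b).le
    _ = (1 + η ^ 2) * Wn * Z := by
        have expand : ∀ b : A, w b * ((1 + η ^ 2) * Wn + η * (ρ b * Z - K))
            = (1 + η ^ 2) * Wn * w b + (η * Z) * (w b * ρ b) - (η * K) * w b :=
          fun b => by ring
        rw [Finset.sum_congr rfl fun b _ => expand b, Finset.sum_sub_distrib,
          Finset.sum_add_distrib, ← Finset.mul_sum, ← Finset.mul_sum, ← Finset.mul_sum,
          ← hZdef, ← hK]
        ring


lemma filter_lt_zero : Finset.univ.filter (fun t : Fin T => t.1 < 0) = ∅ := by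
  ext t
  simp

lemma Ppre_zero (η : ℝ) (a : Fin T → A) : Ppre Av r η 0 a = 1 := by
  unfold Ppre
  rw [filter_lt_zero, Finset.prod_empty]

lemma Sreg_zero (a : Fin T → A) (j : A) : Sreg Av r a 0 j = 0 := by
  unfold Sreg
  rw [filter_lt_zero, Finset.sum_empty]

lemma Wpot_zero (η : ℝ) (a : Fin T → A) : Wpot Av r η a 0 = (Fintype.card A : ℝ) := by
  unfold Wpot
  simp [Sreg_zero]

lemma sum_one_transcripts :
    ∑ _a : Fin T → A, (1 : ℝ) = (Fintype.card A : ℝ) ^ T := by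
  rw [Finset.sum_const, Finset.card_univ, Fintype.card_fun, Fintype.card_fin,
    nsmul_eq_mul, mul_one, Nat.cast_pow]

lemma Ppre_total (η : ℝ) (hAv : ∀ t h, (Av t h).Nonempty) :
    ∀ n, n ≤ T → (Fintype.card A : ℝ) ^ n * ∑ a : Fin T → A, Ppre Av r η n a
      = (Fintype.card A : ℝ) ^ T := by
  intro n
  induction n with
  | zero =>
    intro _
    simp only [pow_zero, one_mul, Ppre_zero]
    exact sum_one_transcripts
  | succ n ih =>
    intro h
    have hn : n < T := h
    have hid := step_identity Av r η hn (fun _ => (1:ℝ))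
    simp only [mul_one] at hid
    have hxu : ∀ a : Fin T → A,
        ∑ b : A, xp Av r η ⟨n, hn⟩ (Function.update a ⟨n, hn⟩ b) = 1 :=
      fun a => sum_xp_update Av r η hAv hn a
    simp only [hxu, mul_one] at hid
    calc (Fintype.card A : ℝ) ^ (n+1) * ∑ a : Fin T → A, Ppre Av r η (n+1) a
        = (Fintype.card A : ℝ) ^ n *
            ((Fintype.card A : ℝ) * ∑ a : Fin T → A, Ppre Av r η (n+1) a) := by
          rw [pow_succ]; ring
      _ = (Fintype.card A : ℝ) ^ n * ∑ a : Fin T → A, Ppre Av r η n a := by rw [hid]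
      _ = (Fintype.card A : ℝ) ^ T := ih (le_of_lt hn)

lemma Wpot_rec (η : ℝ) (hη0 : 0 ≤ η) (hη1 : η ≤ 1)
    (hAv : ∀ t h, (Av t h).Nonempty)
    (hr : ∀ t h j, r t h j ∈ Set.Icc (0:ℝ) 1) :
    ∀ n, n ≤ T → (Fintype.card A : ℝ) ^ n *
        ∑ a : Fin T → A, Ppre Av r η n a * Wpot Av r η a n
      ≤ (1 + η ^ 2) ^ n * ((Fintype.card A : ℝ) ^ T * (Fintype.card A : ℝ)) := by
  intro n
  induction n with
  | zero =>
    intro _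
    simp only [pow_zero, one_mul, Ppre_zero, Wpot_zero]
    have he : ∑ _x : Fin T → A, (Fintype.card A : ℝ)
        = (Fintype.card A : ℝ) ^ T * (Fintype.card A : ℝ) := by
      rw [Finset.sum_const, Finset.card_univ, Fintype.card_fun, Fintype.card_fin,
        nsmul_eq_mul, Nat.cast_pow]
    exact le_of_eq he
  | succ n ih =>
    intro h
    have hn : n < T := h
    have hid := step_identity Av r η hn (fun a => Wpot Av r η a (n+1))
    have hbound : ∑ a : Fin T → A, Ppre Av r η n a *
          ∑ b : A, xp Av r η ⟨n, hn⟩ (Function.update a ⟨n, hn⟩ b)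
            * Wpot Av r η (Function.update a ⟨n, hn⟩ b) (n+1)
        ≤ (1 + η ^ 2) * ∑ a : Fin T → A, Ppre Av r η n a * Wpot Av r η a n := by
      rw [Finset.mul_sum]
      refine Finset.sum_le_sum fun a _ => ?_
      calc Ppre Av r η n a * ∑ b : A, xp Av r η ⟨n, hn⟩ (Function.update a ⟨n, hn⟩ b)
            * Wpot Av r η (Function.update a ⟨n, hn⟩ b) (n+1)
          ≤ Ppre Av r η n a * ((1 + η ^ 2) * Wpot Av r η a n) :=
            mul_le_mul_of_nonneg_left (cond_step Av r η hη0 hη1 hAv hr hn a)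
              (Ppre_nonneg Av r η n a)
        _ = (1 + η ^ 2) * (Ppre Av r η n a * Wpot Av r η a n) := by ring
    have hNn : (0:ℝ) ≤ (Fintype.card A : ℝ) ^ n := by positivity
    have h1η : (0:ℝ) ≤ 1 + η ^ 2 := by positivity
    calc (Fintype.card A : ℝ) ^ (n+1) *
          ∑ a : Fin T → A, Ppre Av r η (n+1) a * Wpot Av r η a (n+1)
        = (Fintype.card A : ℝ) ^ n * ((Fintype.card A : ℝ) *
          ∑ a : Fin T → A, Ppre Av r η (n+1) a * Wpot Av r η a (n+1)) := by
          rw [pow_succ]; ring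
      _ = (Fintype.card A : ℝ) ^ n * ∑ a : Fin T → A, Ppre Av r η n a *
          ∑ b : A, xp Av r η ⟨n, hn⟩ (Function.update a ⟨n, hn⟩ b)
            * Wpot Av r η (Function.update a ⟨n, hn⟩ b) (n+1) := by rw [hid]
      _ ≤ (Fintype.card A : ℝ) ^ n *
          ((1 + η ^ 2) * ∑ a : Fin T → A, Ppre Av r η n a * Wpot Av r η a n) :=
          mul_le_mul_of_nonneg_left hbound hNn
      _ = (1 + η ^ 2) * ((Fintype.card A : ℝ) ^ n *
          ∑ a : Fin T → A, Ppre Av r η n a * Wpot Av r η a n) := by ring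
      _ ≤ (1 + η ^ 2) * ((1 + η ^ 2) ^ n *
          ((Fintype.card A : ℝ) ^ T * (Fintype.card A : ℝ))) :=
          mul_le_mul_of_nonneg_left (ih (le_of_lt hn)) h1η
      _ = (1 + η ^ 2) ^ (n+1) * ((Fintype.card A : ℝ) ^ T * (Fintype.card A : ℝ)) := by
          rw [pow_succ]; ring


lemma Ppre_total_T (η : ℝ) [Nonempty A] (hAv : ∀ t h, (Av t h).Nonempty) :
    ∑ a : Fin T → A, Ppre Av r η T a = 1 := by
  have h := Ppre_total Av r η hAv T (le_refl T)
  have hN : ((Fintype.card A : ℝ)) ^ T ≠ 0 := by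
    have : (0:ℝ) < (Fintype.card A : ℝ) := by
      exact_mod_cast Fintype.card_pos
    positivity
  have h' : ((Fintype.card A : ℝ)) ^ T * (∑ a : Fin T → A, Ppre Av r η T a)
      = ((Fintype.card A : ℝ)) ^ T * 1 := by rw [mul_one]; exact h
  exact mul_left_cancel₀ hN h'

lemma Wpot_final (η : ℝ) [Nonempty A] (hη0 : 0 ≤ η) (hη1 : η ≤ 1)
    (hAv : ∀ t h, (Av t h).Nonempty)
    (hr : ∀ t h j, r t h j ∈ Set.Icc (0:ℝ) 1) :
    ∑ a : Fin T → A, Ppre Av r η T a * Wpot Av r η a T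
      ≤ (Fintype.card A : ℝ) * (1 + η ^ 2) ^ T := by
  have h := Wpot_rec Av r η hη0 hη1 hAv hr T (le_refl T)
  have hNpos : (0:ℝ) < (Fintype.card A : ℝ) ^ T := by
    have : (0:ℝ) < (Fintype.card A : ℝ) := by exact_mod_cast Fintype.card_pos
    positivity
  rw [mul_comm ((1 + η ^ 2) ^ T) _, mul_assoc] at h
  have := (mul_le_mul_iff_right₀ hNpos).mp h
  linarith [this]

lemma expected_regret (η : ℝ) [Nonempty A] (hη0 : 0 < η) (hη1 : η ≤ 1)
    (hAv : ∀ t h, (Av t h).Nonempty)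
    (hr : ∀ t h j, r t h j ∈ Set.Icc (0:ℝ) 1) :
    ∑ a : Fin T → A, Ppre Av r η T a * (⨆ j : A, Sreg Av r a T j)
      ≤ (Real.log (Fintype.card A) + T * η ^ 2) / η := by
  have hNpos : (0:ℝ) < (Fintype.card A : ℝ) := by exact_mod_cast Fintype.card_pos
  set c : ℝ := (Fintype.card A : ℝ) * (1 + η ^ 2) ^ T with hc
  have hcpos : 0 < c := by positivity
  have hWpos : ∀ a : Fin T → A, 0 < Wpot Av r η a T := by
    intro a
    exact Finset.sum_pos (fun j _ => Real.exp_pos _) Finset.univ_nonempty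
  -- pointwise bound on the supremum
  have hsup : ∀ a : Fin T → A, (⨆ j : A, Sreg Av r a T j)
      ≤ (Wpot Av r η a T / c - 1 + Real.log c) / η := by
    intro a
    refine ciSup_le fun j => ?_
    have h1 : Real.exp (η * Sreg Av r a T j) ≤ Wpot Av r η a T :=
      Finset.single_le_sum (f := fun j => Real.exp (η * Sreg Av r a T j))
        (fun j _ => (Real.exp_pos _).le) (Finset.mem_univ j)
    have h2 : η * Sreg Av r a T j ≤ Real.log (Wpot Av r η a T) :=
      (Real.le_log_iff_exp_le (hWpos a)).mpr h1
    have h3 : Real.log (Wpot Av r η a T) ≤ Wpot Av r η a T / c - 1 + Real.log c := by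
      have h4 := Real.log_le_sub_one_of_pos (div_pos (hWpos a) hcpos)
      rw [Real.log_div (hWpos a).ne' hcpos.ne'] at h4
      linarith
    rw [le_div_iff₀ hη0]
    calc Sreg Av r a T j * η = η * Sreg Av r a T j := by ring
      _ ≤ Real.log (Wpot Av r η a T) := h2
      _ ≤ Wpot Av r η a T / c - 1 + Real.log c := h3
  have hstep1 : ∑ a : Fin T → A, Ppre Av r η T a * (⨆ j : A, Sreg Av r a T j)
      ≤ ∑ a : Fin T → A, Ppre Av r η T a
          * ((Wpot Av r η a T / c - 1 + Real.log c) / η) :=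
    Finset.sum_le_sum fun a _ =>
      mul_le_mul_of_nonneg_left (hsup a) (Ppre_nonneg Av r η T a)
  have hexp : ∀ a : Fin T → A, Ppre Av r η T a
        * ((Wpot Av r η a T / c - 1 + Real.log c) / η)
      = (Ppre Av r η T a * Wpot Av r η a T) * (1 / (c * η))
        - Ppre Av r η T a * (1 / η) + Ppre Av r η T a * (Real.log c / η) := by
    intro a
    field_simp
  have hstep2 : ∑ a : Fin T → A, Ppre Av r η T a
        * ((Wpot Av r η a T / c - 1 + Real.log c) / η)
      = (∑ a : Fin T → A, Ppre Av r η T a * Wpot Av r η a T) * (1 / (c * η))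
        - (∑ a : Fin T → A, Ppre Av r η T a) * (1 / η)
        + (∑ a : Fin T → A, Ppre Av r η T a) * (Real.log c / η) := by
    rw [Finset.sum_congr rfl fun a _ => hexp a, Finset.sum_add_distrib,
      Finset.sum_sub_distrib, ← Finset.sum_mul, ← Finset.sum_mul, ← Finset.sum_mul]
  have htot := Ppre_total_T Av r η hAv
  have hWf := Wpot_final Av r η hη0.le hη1 hAv hr
  have hstep3 : (∑ a : Fin T → A, Ppre Av r η T a * Wpot Av r η a T) * (1 / (c * η))
        - (∑ a : Fin T → A, Ppre Av r η T a) * (1 / η)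
        + (∑ a : Fin T → A, Ppre Av r η T a) * (Real.log c / η)
      ≤ Real.log c / η := by
    rw [htot, one_mul, one_mul]
    have h5 : (∑ a : Fin T → A, Ppre Av r η T a * Wpot Av r η a T) * (1 / (c * η))
        ≤ c * (1 / (c * η)) := by
      refine mul_le_mul_of_nonneg_right ?_ (by positivity)
      exact hWf
    have h6 : c * (1 / (c * η)) = 1 / η := by
      field_simp
    linarith
  have hlogc : Real.log c ≤ Real.log (Fintype.card A) + T * η ^ 2 := by
    rw [hc, Real.log_mul hNpos.ne' (by positivity), Real.log_pow]
    have h7 : Real.log (1 + η ^ 2) ≤ η ^ 2 := by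
      have := Real.log_le_sub_one_of_pos (show (0:ℝ) < 1 + η ^ 2 by positivity)
      linarith
    have h8 : (T:ℝ) * Real.log (1 + η ^ 2) ≤ (T:ℝ) * η ^ 2 :=
      mul_le_mul_of_nonneg_left h7 (Nat.cast_nonneg T)
    linarith
  calc ∑ a : Fin T → A, Ppre Av r η T a * (⨆ j : A, Sreg Av r a T j)
      ≤ Real.log c / η := le_trans hstep1 (le_trans (le_of_eq hstep2) hstep3)
    _ ≤ (Real.log (Fintype.card A) + T * η ^ 2) / η :=
        by gcongr
end SleepAux

/-- In the sleeping experts setting with `T ≥ ln|A|`, there exists an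
algorithm for the Learner, playing at each round a distribution over the currently awake
actions, guaranteeing against any adaptive Adversary
`E[R^T_sleeping] ≤ 4√(T ln|A|)`, where
`R^T_sleeping = max_{j∈A} Σ_{t : j ∈ A^t} (r^t_{a^t} − r^t_j)`. -/
theorem sleeping_experts_regret_bound
    (A : Type) [Fintype A] [Nonempty A] [DecidableEq A] (T : ℕ)
    (hT : Real.log (Fintype.card A) ≤ T) :
    ∃ σ : SleepingStrategy A T,
      -- σ always outputs a distribution supported on the awake experts
      (∀ t h past pastAv curAv, (curAv : Finset A).Nonempty →
        (∀ j, 0 ≤ σ t h past pastAv curAv j) ∧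
        (∀ j ∉ curAv, σ t h past pastAv curAv j = 0) ∧
        ∑ j, σ t h past pastAv curAv j = 1) ∧
      ∀ (Av : ∀ t : Fin T, (Fin t.1 → A) → Finset A)
        (r : ∀ t : Fin T, (Fin t.1 → A) → A → ℝ),
        (∀ t h, (Av t h).Nonempty) →
        (∀ t h j, r t h j ∈ Set.Icc (0 : ℝ) 1) →
        ∑ a : Fin T → A, (∏ t, sleepingPlay σ Av r t (transcriptPrefix a t) (a t)) *
            (⨆ j : A, ∑ t, if j ∈ Av t (transcriptPrefix a t) then
              r t (transcriptPrefix a t) (a t) - r t (transcriptPrefix a t) j else 0) ≤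
          4 * Real.sqrt (T * Real.log (Fintype.card A)) := by
  classical
  set L := Real.log (Fintype.card A) with hL
  set η := Real.sqrt L / Real.sqrt T with hη
  refine ⟨SleepAux.strat η, fun t h past pastAv curAv hC =>
    SleepAux.strat_prob η t h past pastAv curAv hC, ?_⟩
  intro Av r hAv hr
  have hprod : ∀ a : Fin T → A,
      (∏ t, sleepingPlay (SleepAux.strat η) Av r t (transcriptPrefix a t) (a t))
        = SleepAux.Ppre Av r η T a := by
    intro a
    unfold SleepAux.Ppre
    rw [Finset.filter_true_of_mem (fun t _ => t.2)]
    rfl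
  have hsup : ∀ a : Fin T → A,
      (⨆ j : A, ∑ t, if j ∈ Av t (transcriptPrefix a t) then
        r t (transcriptPrefix a t) (a t) - r t (transcriptPrefix a t) j else 0)
      = ⨆ j : A, SleepAux.Sreg Av r a T j := by
    intro a
    refine iSup_congr fun j => ?_
    unfold SleepAux.Sreg
    rw [Finset.filter_true_of_mem (fun t _ => t.2)]
    rfl
  simp only [hprod, hsup]
  by_cases hone : Fintype.card A = 1
  · -- the one-expert case is trivial: the regret is identically zero
    have hsub : Subsingleton A := Fintype.card_le_one_iff_subsingleton.mp (le_of_eq hone)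
    have hzero : ∀ (a : Fin T → A) (j : A), SleepAux.Sreg Av r a T j = 0 := by
      intro a j
      unfold SleepAux.Sreg
      refine Finset.sum_eq_zero fun t _ => ?_
      unfold SleepAux.gain
      rw [Subsingleton.elim (a t) j, sub_self, ite_self]
    simp only [hzero, ciSup_const, mul_zero, Finset.sum_const_zero]
    positivity
  · have hcard2 : 2 ≤ Fintype.card A := by
      have h1 := Fintype.card_pos (α := A)
      omega
    have hL0 : 0 < L := Real.log_pos (by exact_mod_cast hcard2)
    have hT0 : (0:ℝ) < (T:ℝ) := lt_of_lt_of_le hL0 hT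
    have hη0 : 0 < η := div_pos (Real.sqrt_pos.mpr hL0) (Real.sqrt_pos.mpr hT0)
    have hη1 : η ≤ 1 := by
      rw [hη, div_le_one (Real.sqrt_pos.mpr hT0)]
      exact Real.sqrt_le_sqrt hT
    refine le_trans (SleepAux.expected_regret Av r η hη0 hη1 hAv hr) ?_
    have hTη : (T:ℝ) * η ^ 2 = L := by
      rw [hη, div_pow, Real.sq_sqrt hL0.le, Real.sq_sqrt hT0.le]
      field_simp
    rw [hTη]
    have hLdiv : L / Real.sqrt L = Real.sqrt L := Real.div_sqrt
    have hLη : (L + L) / η = 2 * (Real.sqrt T * Real.sqrt L) := by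
      rw [hη, div_div_eq_mul_div]
      rw [show (L + L) * Real.sqrt (T:ℝ) = 2 * Real.sqrt (T:ℝ) * L by ring]
      rw [mul_div_assoc, hLdiv]
      ring
    rw [hLη, Real.sqrt_mul hT0.le]
    have hnn : 0 ≤ Real.sqrt (T:ℝ) * Real.sqrt L :=
      mul_nonneg (Real.sqrt_nonneg _) (Real.sqrt_nonneg _)
    linarith

end
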